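/- Let v be a sequence with 0 ≤ v(k) ≤ 1 for all k, and w a positive sequence with c·w(k+1) ≤ w(k) ≤ d·w(k+1) for c, d > 0. Define the operator K(v) on sequences vanishing at 0 by K(v)x(k) = αL v(k-1)^{L-1} x(k-1) - (αL v(k)^{L-1} + β)x(k) + β x(k+1) for k ≥ 1 (with x(0) = 0). Then K(v) is a bounded operator on L₂(w) with ‖K(v)x‖²_{L₂(w)} ≤ 2(αL+β)(αL(d+1) + β(c^{-1}+1))·‖x‖²_{L₂(w)}, uniformly in v. -/

import Mathlib

open ENNReal

lemma cs4 (A bet a b p q r W : ℝ) (hbet : 0 ≤ bet) (ha0 : 0 ≤ a) (haA : a ≤ A)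
    (hb0 : 0 ≤ b) (hbA : b ≤ A) (hW : 0 < W) :
    (a*p - (b+bet)*q + bet*r)^2 / W ≤
      2*(A+bet) * (a*p^2/W) + 2*(A+bet) * (b*q^2/W) + 2*(A+bet) * (bet*q^2/W)
        + 2*(A+bet) * (bet*r^2/W) := by
  have h1 : (a*p - (b+bet)*q + bet*r)^2 ≤ (a+b+2*bet) * (a*p^2 + b*q^2 + bet*q^2 + bet*r^2) := by
    nlinarith [mul_nonneg (mul_nonneg ha0 hb0) (sq_nonneg (p+q)),
      mul_nonneg (mul_nonneg ha0 hbet) (sq_nonneg (p+q)),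
      mul_nonneg (mul_nonneg ha0 hbet) (sq_nonneg (p-r)),
      mul_nonneg (mul_nonneg hb0 hbet) (sq_nonneg (q+r)),
      mul_nonneg (mul_nonneg hbet hbet) (sq_nonneg (q+r))]
  have h2 : (a*p - (b+bet)*q + bet*r)^2 ≤ 2*(A+bet) * (a*p^2 + b*q^2 + bet*q^2 + bet*r^2) := by
    calc (a*p - (b+bet)*q + bet*r)^2
        ≤ (a+b+2*bet) * (a*p^2 + b*q^2 + bet*q^2 + bet*r^2) := h1
      _ ≤ 2*(A+bet) * (a*p^2 + b*q^2 + bet*q^2 + bet*r^2) := by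
          apply mul_le_mul_of_nonneg_right (by linarith)
          have hA0 : 0 ≤ A := le_trans ha0 haA
          positivity
  calc (a*p - (b+bet)*q + bet*r)^2 / W
      ≤ (2*(A+bet) * (a*p^2 + b*q^2 + bet*q^2 + bet*r^2)) / W := by gcongr
    _ = 2*(A+bet) * (a*p^2/W) + 2*(A+bet) * (b*q^2/W) + 2*(A+bet) * (bet*q^2/W)
        + 2*(A+bet) * (bet*r^2/W) := by field_simp

lemma K_aux (A β : ℝ) (hA0 : 0 < A) (hβ : 0 < β)
    (a : ℕ → ℝ) (ha0 : ∀ k, 0 ≤ a k) (haA : ∀ k, a k ≤ A)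
    (w : ℕ → ℝ) (c d : ℝ) (hc : 0 < c) (hd : 0 < d)
    (hw : ∀ k, 1 ≤ k → 0 < w k)
    (hcw : ∀ k, 1 ≤ k → c * w (k + 1) ≤ w k)
    (hdw : ∀ k, 1 ≤ k → w k ≤ d * w (k + 1))
    (x : ℕ → ℝ) (hx : x 0 = 0) :
    ∑' k : ℕ, ENNReal.ofReal
        ((a k * x k - (a (k + 1) + β) * x (k + 1) + β * x (k + 2)) ^ 2 / w (k + 1)) ≤
      ENNReal.ofReal (2 * (A + β) * (A * (d + 1) + β * (c⁻¹ + 1))) *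
        ∑' k : ℕ, ENNReal.ofReal ((x (k + 1)) ^ 2 / w (k + 1)) := by
  set S : ℝ≥0∞ := ∑' k : ℕ, ENNReal.ofReal ((x (k + 1)) ^ 2 / w (k + 1)) with hS
  set M : ℝ≥0∞ := ENNReal.ofReal (2 * (A + β)) with hM
  have ptwise : ∀ k : ℕ,
      ENNReal.ofReal ((a k * x k - (a (k+1) + β) * x (k+1) + β * x (k+2)) ^ 2 / w (k+1)) ≤
        M * ENNReal.ofReal (a k * (x k)^2 / w (k+1))
        + M * ENNReal.ofReal (a (k+1) * (x (k+1))^2 / w (k+1))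
        + M * ENNReal.ofReal (β * (x (k+1))^2 / w (k+1))
        + M * ENNReal.ofReal (β * (x (k+2))^2 / w (k+1)) := by
    intro k
    have hWk : 0 < w (k+1) := hw (k+1) (Nat.le_add_left 1 k)
    have key := cs4 A β (a k) (a (k+1)) (x k) (x (k+1)) (x (k+2)) (w (k+1))
      hβ.le (ha0 k) (haA k) (ha0 (k+1)) (haA (k+1)) hWk
    have n1 : (0:ℝ) ≤ a k * (x k)^2 / w (k+1) :=
      div_nonneg (mul_nonneg (ha0 k) (sq_nonneg _)) hWk.le
    have n2 : (0:ℝ) ≤ a (k+1) * (x (k+1))^2 / w (k+1) :=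
      div_nonneg (mul_nonneg (ha0 (k+1)) (sq_nonneg _)) hWk.le
    have n3 : (0:ℝ) ≤ β * (x (k+1))^2 / w (k+1) :=
      div_nonneg (mul_nonneg hβ.le (sq_nonneg _)) hWk.le
    have n4 : (0:ℝ) ≤ β * (x (k+2))^2 / w (k+1) :=
      div_nonneg (mul_nonneg hβ.le (sq_nonneg _)) hWk.le
    have hc0 : (0:ℝ) ≤ 2 * (A + β) := by linarith
    have hM1 : ∀ t : ℝ, ENNReal.ofReal (2*(A+β) * t) = M * ENNReal.ofReal t := by
      intro t
      rw [hM, ENNReal.ofReal_mul hc0]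
    calc ENNReal.ofReal ((a k * x k - (a (k+1) + β) * x (k+1) + β * x (k+2)) ^ 2 / w (k+1))
        ≤ ENNReal.ofReal (2*(A+β) * (a k * (x k)^2 / w (k+1))
            + 2*(A+β) * (a (k+1) * (x (k+1))^2 / w (k+1))
            + 2*(A+β) * (β * (x (k+1))^2 / w (k+1))
            + 2*(A+β) * (β * (x (k+2))^2 / w (k+1))) := ENNReal.ofReal_le_ofReal key
      _ = _ := by
          rw [ENNReal.ofReal_add (by nlinarith) (by nlinarith),
            ENNReal.ofReal_add (by nlinarith) (by nlinarith),
            ENNReal.ofReal_add (by nlinarith) (by nlinarith),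
            hM1, hM1, hM1, hM1]
  have hT1 : (∑' k : ℕ, ENNReal.ofReal (a k * (x k)^2 / w (k+1))) ≤
      ENNReal.ofReal (A * d) * S := by
    rw [tsum_eq_zero_add' (f := fun k : ℕ => ENNReal.ofReal (a k * (x k)^2 / w (k+1)))
      ENNReal.summable]
    have h0 : ENNReal.ofReal (a 0 * (x 0)^2 / w 1) = 0 := by
      rw [hx]; norm_num
    rw [h0, zero_add, hS, ← ENNReal.tsum_mul_left]
    apply ENNReal.tsum_le_tsum
    intro k
    rw [← ENNReal.ofReal_mul (mul_nonneg hA0.le hd.le)]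
    apply ENNReal.ofReal_le_ofReal
    have hW1 : 0 < w (k+1) := hw (k+1) (Nat.le_add_left 1 k)
    have hW2 : 0 < w (k+1+1) := hw (k+2) (Nat.le_add_left 1 (k+1))
    have hd1 : w (k+1) ≤ d * w (k+1+1) := hdw (k+1) (Nat.le_add_left 1 k)
    rw [div_le_iff₀ hW2]
    calc a (k+1) * (x (k+1))^2 ≤ A * (x (k+1))^2 :=
          mul_le_mul_of_nonneg_right (haA (k+1)) (sq_nonneg _)
      _ = (x (k+1))^2 / w (k+1) * A * w (k+1) := by field_simp
      _ ≤ (x (k+1))^2 / w (k+1) * A * (d * w (k+1+1)) := by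
          apply mul_le_mul_of_nonneg_left hd1
          exact mul_nonneg (div_nonneg (sq_nonneg _) hW1.le) hA0.le
      _ = A * d * (x (k+1)^2 / w (k+1)) * w (k+1+1) := by ring
  have hT2 : (∑' k : ℕ, ENNReal.ofReal (a (k+1) * (x (k+1))^2 / w (k+1))) ≤
      ENNReal.ofReal A * S := by
    rw [hS, ← ENNReal.tsum_mul_left]
    apply ENNReal.tsum_le_tsum
    intro k
    rw [← ENNReal.ofReal_mul hA0.le]
    apply ENNReal.ofReal_le_ofReal
    have hW1 : 0 < w (k+1) := hw (k+1) (Nat.le_add_left 1 k)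
    rw [mul_div_assoc]
    exact mul_le_mul_of_nonneg_right (haA (k+1)) (div_nonneg (sq_nonneg _) hW1.le)
  have hT3 : (∑' k : ℕ, ENNReal.ofReal (β * (x (k+1))^2 / w (k+1))) ≤
      ENNReal.ofReal β * S := by
    rw [hS, ← ENNReal.tsum_mul_left]
    apply ENNReal.tsum_le_tsum
    intro k
    rw [← ENNReal.ofReal_mul hβ.le, mul_div_assoc]
  have hT4 : (∑' k : ℕ, ENNReal.ofReal (β * (x (k+2))^2 / w (k+1))) ≤
      ENNReal.ofReal (β * c⁻¹) * S := by
    have hbc : (0:ℝ) ≤ β * c⁻¹ := mul_nonneg hβ.le (inv_nonneg.mpr hc.le)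
    have step : (∑' k : ℕ, ENNReal.ofReal (β * (x (k+2))^2 / w (k+1))) ≤
        ∑' k : ℕ, ENNReal.ofReal (β * c⁻¹) * ENNReal.ofReal ((x (k+2))^2 / w (k+2)) := by
      apply ENNReal.tsum_le_tsum
      intro k
      rw [← ENNReal.ofReal_mul hbc]
      apply ENNReal.ofReal_le_ofReal
      have hW1 : 0 < w (k+1) := hw (k+1) (Nat.le_add_left 1 k)
      have hW2 : 0 < w (k+2) := hw (k+2) (Nat.le_add_left 1 (k+1))
      have hc1 : c * w (k+2) ≤ w (k+1) := hcw (k+1) (Nat.le_add_left 1 k)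
      rw [div_le_iff₀ hW1]
      have h1 : β * c⁻¹ * ((x (k+2))^2 / w (k+2)) * (c * w (k+2))
          ≤ β * c⁻¹ * ((x (k+2))^2 / w (k+2)) * w (k+1) := by
        apply mul_le_mul_of_nonneg_left hc1
        exact mul_nonneg hbc (div_nonneg (sq_nonneg _) hW2.le)
      calc β * (x (k+2))^2 = β * c⁻¹ * ((x (k+2))^2 / w (k+2)) * (c * w (k+2)) := by
            field_simp
        _ ≤ _ := h1
    calc _ ≤ _ := step
      _ = ENNReal.ofReal (β * c⁻¹) * ∑' k : ℕ, ENNReal.ofReal ((x (k+2))^2 / w (k+2)) :=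
          ENNReal.tsum_mul_left
      _ ≤ ENNReal.ofReal (β * c⁻¹) * S := by
          apply mul_le_mul_of_nonneg_left _ (zero_le)
          rw [hS, tsum_eq_zero_add' (f := fun k : ℕ => ENNReal.ofReal ((x (k+1))^2 / w (k+1)))
            ENNReal.summable]
          exact le_add_self
  have nn1 : (0:ℝ) ≤ A * d := mul_nonneg hA0.le hd.le
  have nn2 : (0:ℝ) ≤ A * d + A := by nlinarith
  have nn3 : (0:ℝ) ≤ A * d + A + β := by nlinarith
  have nn4 : (0:ℝ) ≤ β * c⁻¹ := mul_nonneg hβ.le (inv_nonneg.mpr hc.le)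
  have hc0 : (0:ℝ) ≤ 2 * (A + β) := by nlinarith
  calc ∑' k : ℕ, ENNReal.ofReal
        ((a k * x k - (a (k+1) + β) * x (k+1) + β * x (k+2)) ^ 2 / w (k+1))
      ≤ ∑' k : ℕ, (M * ENNReal.ofReal (a k * (x k)^2 / w (k+1))
        + M * ENNReal.ofReal (a (k+1) * (x (k+1))^2 / w (k+1))
        + M * ENNReal.ofReal (β * (x (k+1))^2 / w (k+1))
        + M * ENNReal.ofReal (β * (x (k+2))^2 / w (k+1))) :=
        ENNReal.tsum_le_tsum (fun k => ptwise k)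
    _ = M * (∑' k : ℕ, ENNReal.ofReal (a k * (x k)^2 / w (k+1)))
        + M * (∑' k : ℕ, ENNReal.ofReal (a (k+1) * (x (k+1))^2 / w (k+1)))
        + M * (∑' k : ℕ, ENNReal.ofReal (β * (x (k+1))^2 / w (k+1)))
        + M * (∑' k : ℕ, ENNReal.ofReal (β * (x (k+2))^2 / w (k+1))) := by
        rw [ENNReal.tsum_add, ENNReal.tsum_add, ENNReal.tsum_add,
          ENNReal.tsum_mul_left, ENNReal.tsum_mul_left, ENNReal.tsum_mul_left,
          ENNReal.tsum_mul_left]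
    _ ≤ M * (ENNReal.ofReal (A * d) * S) + M * (ENNReal.ofReal A * S)
        + M * (ENNReal.ofReal β * S) + M * (ENNReal.ofReal (β * c⁻¹) * S) := by
        gcongr
    _ = M * (ENNReal.ofReal (A * d) + ENNReal.ofReal A + ENNReal.ofReal β
          + ENNReal.ofReal (β * c⁻¹)) * S := by ring
    _ = ENNReal.ofReal (2 * (A + β) * (A * d + A + β + β * c⁻¹)) * S := by
        rw [← ENNReal.ofReal_add nn1 hA0.le, ← ENNReal.ofReal_add nn2 hβ.le,
          ← ENNReal.ofReal_add nn3 nn4, hM, ← ENNReal.ofReal_mul hc0]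
    _ = ENNReal.ofReal (2 * (A + β) * (A * (d + 1) + β * (c⁻¹ + 1))) * S := by
        congr 1
        ring_nf

/-- For `v` with values in `[0,1]` and a weight `w` with `c w(k+1) ≤ w(k) ≤ d w(k+1)`,
the operator `K(v)x(k) = αL v(k-1)^{L-1} x(k-1) - (αL v(k)^{L-1} + β) x(k) + β x(k+1)`
is bounded on `L₂(w)` with norm bound `2(αL+β)(αL(d+1)+β(c⁻¹+1))`, uniformly in `v`. -/
theorem K_operator_bounded (α β : ℝ) (hα : 0 < α) (hβ : 0 < β) (L : ℕ) (hL : 1 ≤ L)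
    (v : ℕ → ℝ) (hv : ∀ k, 0 ≤ v k ∧ v k ≤ 1)
    (w : ℕ → ℝ) (c d : ℝ) (hc : 0 < c) (hd : 0 < d)
    (hw : ∀ k, 1 ≤ k → 0 < w k)
    (hcw : ∀ k, 1 ≤ k → c * w (k + 1) ≤ w k)
    (hdw : ∀ k, 1 ≤ k → w k ≤ d * w (k + 1))
    (x : ℕ → ℝ) (hx : x 0 = 0) :
    ∑' k : ℕ, ENNReal.ofReal
        ((α * L * (v k) ^ (L - 1) * x k -
            (α * L * (v (k + 1)) ^ (L - 1) + β) * x (k + 1) + β * x (k + 2)) ^ 2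
          / w (k + 1)) ≤
      ENNReal.ofReal (2 * (α * L + β) * (α * L * (d + 1) + β * (c⁻¹ + 1))) *
        ∑' k : ℕ, ENNReal.ofReal ((x (k + 1)) ^ 2 / w (k + 1)) := by
  have hA0 : (0:ℝ) < α * L := by
    have : (1:ℝ) ≤ (L:ℝ) := by exact_mod_cast hL
    positivity
  exact K_aux (α * L) β hA0 hβ (fun k => α * L * (v k) ^ (L - 1))
    (fun k => mul_nonneg hA0.le (pow_nonneg (hv k).1 _))
    (fun k => by
      have h1 := pow_le_one₀ (hv k).1 (hv k).2 (n := L - 1)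
      calc α * (L:ℝ) * (v k) ^ (L - 1) ≤ α * L * 1 :=
            mul_le_mul_of_nonneg_left h1 hA0.le
        _ = α * L := mul_one _)
    w c d hc hd hw hcw hdw x hx
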